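/- If a finite simplicial complex K is tight over a field F but its geometric realization is not connected, then K is the complex S^0 = ∂Δ^[2] consisting of two disjoint vertices. -/

import Mathlib

/-- An (abstract) simplicial complex: a collection of finite subsets of `ℕ`
closed under taking subsets. -/
def IsComplex (K : Finset (Finset ℕ)) : Prop :=
  ∀ σ ∈ K, ∀ τ ⊆ σ, τ ∈ K

/-- The vertex set of a complex: the union of all its simplices. -/
def verts (K : Finset (Finset ℕ)) : Finset ℕ := K.sup id

/-- The space of (augmented) simplicial `j`-chains: formal `F`-linear combinations of
simplices of cardinality `j` (so chain degree `j` corresponds to dimension `j - 1`;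
degree `0` is spanned by the empty simplex). -/
abbrev Chain (F : Type*) [Field F] (K : Finset (Finset ℕ)) (j : ℕ) : Type _ :=
  {σ // σ ∈ K.filter (fun σ => σ.card = j)} → F

/-- The simplicial boundary operator (of the augmented chain complex), with the usual
signs `(-1)^{position of the deleted vertex}`. -/
noncomputable def bdry (F : Type*) [Field F] (K : Finset (Finset ℕ)) (j : ℕ) :
    Chain F K (j + 1) →ₗ[F] Chain F K j where
  toFun c := fun τ =>
    ∑ v ∈ verts K,
      if h : v ∉ τ.1 ∧ insert v τ.1 ∈ K.filter (fun σ => σ.card = j + 1) then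
        (-1 : F) ^ ((τ.1.filter (fun u => u < v)).card) * c ⟨insert v τ.1, h.2⟩
      else 0
  map_add' c d := by
    funext τ
    show _ = (_ : F) + (_ : F)
    rw [← Finset.sum_add_distrib]
    refine Finset.sum_congr rfl fun v _ => ?_
    by_cases h : v ∉ τ.1 ∧ insert v τ.1 ∈ K.filter (fun σ => σ.card = j + 1)
    · rw [dif_pos h, dif_pos h, dif_pos h, ← mul_add]
      rfl
    · rw [dif_neg h, dif_neg h, dif_neg h, add_zero]
  map_smul' a c := by
    funext τ
    show _ = a * _
    rw [Finset.mul_sum]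
    refine Finset.sum_congr rfl fun v _ => ?_
    by_cases h : v ∉ τ.1 ∧ insert v τ.1 ∈ K.filter (fun σ => σ.card = j + 1)
    · rw [dif_pos h, dif_pos h]
      show _ * (a * _) = _
      ring
    · rw [dif_neg h, dif_neg h, mul_zero]

/-- The dimension of the `j`-th homology of the augmented simplicial chain complex of `K`.
Degree `j` corresponds to the reduced homology group `H̃_{j-1}` of the realization of `K`. -/
noncomputable def hBetti (F : Type*) [Field F] (K : Finset (Finset ℕ)) : ℕ → ℕ
  | 0 => Module.finrank F (Chain F K 0) - Module.finrank F (LinearMap.range (bdry F K 0))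
  | j + 1 =>
      Module.finrank F (LinearMap.ker (bdry F K j)) -
        Module.finrank F (LinearMap.range (bdry F K (j + 1)))

/-- The reduced total Betti number `t̃b(K; F) = ∑ i dim H̃ i (K; F)` of (the geometric
realization of) `K`, with the convention `t̃b(∅; F) = 1` (coming from `β̃₋₁(∅) = 1`;
note that if `K` is nonempty and closed under subsets then `∅ ∈ K` and the augmented
chain complex accounts for `β̃₋₁` automatically). -/
noncomputable def rtb (F : Type*) [Field F] (K : Finset (Finset ℕ)) : ℕ :=
  if K = ∅ then 1 else ∑ j ∈ Finset.range ((verts K).card + 1), hBetti F K j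

/-- The full subcomplex `K|_J` of `K` on a vertex set `J`. -/
def restr (K : Finset (Finset ℕ)) (J : Finset ℕ) : Finset (Finset ℕ) :=
  K.filter (fun σ => σ ⊆ J)

/-- The total bigraded Betti number `D̃(K; F) = ∑_{J ⊆ V} t̃b(K|_J; F)`
with respect to a ground vertex set `V`. -/
noncomputable def Dtilde (F : Type*) [Field F] (V : Finset ℕ) (K : Finset (Finset ℕ)) : ℕ :=
  ∑ J ∈ V.powerset, rtb F (restr K J)


/-- The `k`-skeleton `Δ^[m]_(k)` of the full simplex on the vertex set
`[m] = {0, 1, …, m-1}`: all subsets of cardinality at most `k + 1`. -/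
def skel (m k : ℕ) : Finset (Finset ℕ) :=
  (Finset.range m).powerset.filter (fun σ => σ.card ≤ k + 1)

/-- The `k`-skeleton of the full simplex on `[m]` for an integer `k`
(so `k = -1` gives the empty complex `{∅}`). -/
def skelZ (m : ℕ) (k : ℤ) : Finset (Finset ℕ) :=
  (Finset.range m).powerset.filter (fun σ => (σ.card : ℤ) ≤ k + 1)

/-- `Δ^[m]_(k)⟨d⟩`: the union of the `k`-skeleton of the full simplex on `[m]`
with the single `d`-simplex `{0, 1, …, d}` and all its faces. -/
def skelD (m k d : ℕ) : Finset (Finset ℕ) :=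
  skel m k ∪ (Finset.range (d + 1)).powerset

/-- `K` and `L` are isomorphic simplicial complexes: some injection of the vertex
set of `K` maps the simplices of `K` exactly onto the simplices of `L`. -/
def SIso (K L : Finset (Finset ℕ)) : Prop :=
  ∃ f : ℕ → ℕ, Set.InjOn f ↑(verts K) ∧ L = K.image (fun σ => σ.image f)

/-- `g(m,d) = ∑_{j=d+1}^{m} C(m,j)·C(j-1,d)`. -/
def g (m d : ℕ) : ℕ := ∑ j ∈ Finset.Icc (d + 1) m, m.choose j * (j - 1).choose d

/-- The join `K * L` of two simplicial complexes (on disjoint vertex sets). -/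
def sJoin (K L : Finset (Finset ℕ)) : Finset (Finset ℕ) :=
  (K ×ˢ L).image fun p => p.1 ∪ p.2

/-- A `d`-dimensional simplicial complex `K` with `m` vertices is tight over `F` if
`D̃(K;F) = 2^{m-d-1}` (note `m - d - 1 = m - (d+1)` and `d + 1 = max σ∈K |σ|`),
where `D̃` is computed with respect to the vertex set of `K`. -/
def IsTight (F : Type*) [Field F] (K : Finset (Finset ℕ)) : Prop :=
  Dtilde F (verts K) K = 2 ^ ((verts K).card - K.sup Finset.card)

/-- The link of a simplex `σ` in `K`. -/
def linkK (K : Finset (Finset ℕ)) (σ : Finset ℕ) : Finset (Finset ℕ) :=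
  K.filter (fun τ => Disjoint τ σ ∧ τ ∪ σ ∈ K)

/-- `K` is pure: every maximal simplex has the maximum cardinality `dim K + 1`. -/
def IsPure (K : Finset (Finset ℕ)) : Prop :=
  ∀ σ ∈ K, (∀ τ ∈ K, σ ⊆ τ → σ = τ) → σ.card = K.sup Finset.card

/-- A near-cone (with apex vertex `0`): for every simplex `S` with `0 ∉ S` and every
`j ∈ S`, `(S \ j) ∪ {0}` is again a simplex. -/
def IsNearCone (Δ : Finset (Finset ℕ)) : Prop :=
  ∀ S ∈ Δ, 0 ∉ S → ∀ j ∈ S, insert 0 (S.erase j) ∈ Δ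

/-- `B(Δ) = {S ∈ Δ : S ∪ {0} ∉ Δ}` for a near-cone `Δ` with apex `0`. -/
def BSet (Δ : Finset (Finset ℕ)) : Finset (Finset ℕ) :=
  Δ.filter (fun S => insert 0 S ∉ Δ)

/-- A Sperner family of the finite set `X`: a family of subsets of `X`, no member
containing another member. -/
def IsSperner (X : Finset ℕ) (F : Finset (Finset ℕ)) : Prop :=
  (∀ A ∈ F, A ⊆ X) ∧ ∀ A ∈ F, ∀ B ∈ F, A ⊆ B → A = B

/-- The geometric realization of `K` is disconnected: the vertex set splits into two
nonempty parts such that every simplex lies entirely in one of the parts. -/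
def IsDisconn (K : Finset (Finset ℕ)) : Prop :=
  ∃ A B : Finset ℕ, A.Nonempty ∧ B.Nonempty ∧ Disjoint A B ∧ A ∪ B = verts K ∧
    ∀ σ ∈ K, σ ⊆ A ∨ σ ⊆ B

/-- The boundary `∂Δ^A` of the full simplex on the vertex set `A`: all proper subsets
of `A`.  (For `|A| = 1` this is the empty complex `{∅}`.) -/
def bdSimplex (A : Finset ℕ) : Finset (Finset ℕ) := A.powerset.erase A




lemma chain_rank (F : Type*) [Field F] (K : Finset (Finset ℕ)) (j : ℕ) :
    Module.finrank F (Chain F K j) = (K.filter (fun σ => σ.card = j)).card :=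
  (Module.finrank_fintype_fun_eq_card F).trans (Fintype.card_coe _)

lemma range_rank_le (F : Type*) [Field F] (K : Finset (Finset ℕ)) (j : ℕ) :
    Module.finrank F (LinearMap.range (bdry F K j)) ≤
      (K.filter (fun σ => σ.card = j + 1)).card := by
  rw [← chain_rank F K (j+1)]
  exact LinearMap.finrank_range_le _

lemma range_in_chain_le (F : Type*) [Field F] (K : Finset (Finset ℕ)) (j : ℕ) :
    Module.finrank F (LinearMap.range (bdry F K j)) ≤
      (K.filter (fun σ => σ.card = j)).card := by
  rw [← chain_rank F K j]
  exact Submodule.finrank_le _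

lemma card_filter_zero_le (K : Finset (Finset ℕ)) :
    (K.filter (fun σ => σ.card = 0)).card ≤ 1 := by
  apply Finset.card_le_one.2
  intro a ha b hb
  simp only [Finset.mem_filter, Finset.card_eq_zero] at ha hb
  rw [ha.2, hb.2]

lemma ker_bdry0_ge (F : Type*) [Field F] (K : Finset (Finset ℕ)) :
    (K.filter (fun σ => σ.card = 1)).card - 1 ≤
      Module.finrank F (LinearMap.ker (bdry F K 0)) := by
  have h := LinearMap.finrank_range_add_finrank_ker (bdry F K 0)
  rw [chain_rank] at h
  have h2 : Module.finrank F (LinearMap.range (bdry F K 0)) ≤ 1 :=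
    (range_in_chain_le F K 0).trans (card_filter_zero_le K)
  norm_num at h
  omega

lemma mem_verts {K : Finset (Finset ℕ)} {v : ℕ} : v ∈ verts K ↔ ∃ σ ∈ K, v ∈ σ := by
  simp [verts, Finset.mem_sup]

lemma singleton_mem {K : Finset (Finset ℕ)} (hK : IsComplex K) {v : ℕ} (hv : v ∈ verts K) :
    {v} ∈ K := by
  obtain ⟨σ, hσ, hvσ⟩ := mem_verts.1 hv
  exact hK σ hσ {v} (Finset.singleton_subset_iff.2 hvσ)

lemma restr_isComplex {K : Finset (Finset ℕ)} (hK : IsComplex K) (J : Finset ℕ) :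
    IsComplex (restr K J) := by
  intro σ hσ τ hτ
  simp only [restr, Finset.mem_filter] at hσ ⊢
  exact ⟨hK σ hσ.1 τ hτ, hτ.trans hσ.2⟩

lemma restr_subset {K : Finset (Finset ℕ)} {J : Finset ℕ} {σ : Finset ℕ}
    (h : σ ∈ restr K J) : σ ∈ K ∧ σ ⊆ J := by
  simpa [restr] using h

lemma mem_restr {K : Finset (Finset ℕ)} {J σ : Finset ℕ} :
    σ ∈ restr K J ↔ σ ∈ K ∧ σ ⊆ J := by simp [restr]

lemma verts_restr {K : Finset (Finset ℕ)} (hK : IsComplex K) {J : Finset ℕ}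
    (hJ : J ⊆ verts K) : verts (restr K J) = J := by
  apply Finset.Subset.antisymm
  · intro v hv
    obtain ⟨σ, hσ, hvσ⟩ := mem_verts.1 hv
    exact (mem_restr.1 hσ).2 hvσ
  · intro v hv
    exact mem_verts.2 ⟨{v}, mem_restr.2 ⟨singleton_mem hK (hJ hv),
      Finset.singleton_subset_iff.2 hv⟩, Finset.mem_singleton_self v⟩

lemma bdry_apply (F : Type*) [Field F] (K : Finset (Finset ℕ)) (j : ℕ)
    (c : Chain F K (j+1)) (τ : {σ // σ ∈ K.filter (fun σ => σ.card = j)}) :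
    bdry F K j c τ = ∑ v ∈ verts K,
      if h : v ∉ τ.1 ∧ insert v τ.1 ∈ K.filter (fun σ => σ.card = j + 1) then
        (-1 : F) ^ ((τ.1.filter (fun u => u < v)).card) * c ⟨insert v τ.1, h.2⟩
      else 0 := rfl

lemma sing_of {σ : Finset ℕ} {u : ℕ} (h1 : σ.card = 1) (hu : u ∈ σ) : σ = {u} := by
  obtain ⟨a, rfl⟩ := Finset.card_eq_one.1 h1
  rw [Finset.mem_singleton.1 hu]

noncomputable def phiS (F : Type*) [Field F] (K : Finset (Finset ℕ)) (S : Finset ℕ) :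
    Chain F K 1 →ₗ[F] F where
  toFun c := ∑ τ : {σ // σ ∈ K.filter (fun σ => σ.card = 1)},
    if (τ : Finset ℕ) ⊆ S then c τ else 0
  map_add' c d := by
    rw [← Finset.sum_add_distrib]
    refine Finset.sum_congr rfl fun τ _ => ?_
    by_cases h : (τ : Finset ℕ) ⊆ S <;> simp [h]
  map_smul' a c := by
    show _ = a * _
    rw [Finset.mul_sum]
    refine Finset.sum_congr rfl fun τ _ => ?_
    by_cases h : (τ : Finset ℕ) ⊆ S <;> simp [h]

set_option maxHeartbeats 1000000 in
lemma phiS_bdry (F : Type*) [Field F] (K : Finset (Finset ℕ)) (hK : IsComplex K)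
    (S : Finset ℕ)
    (hedge : ∀ σ ∈ K, σ.card = 2 → ∀ u ∈ σ, ∀ v ∈ σ, u ∈ S → v ∈ S)
    (c : Chain F K 2) : phiS F K S (bdry F K 1 c) = 0 := by
  classical
  set X := K.filter (fun σ => σ.card = 1) with hX
  set f : Finset ℕ × ℕ → F := fun p =>
    if h : p.1 ⊆ S ∧ p.2 ∉ p.1 ∧ insert p.2 p.1 ∈ K.filter (fun σ => σ.card = 1 + 1) then
      (-1 : F) ^ ((p.1.filter (fun u => u < p.2)).card) * c ⟨insert p.2 p.1, h.2.2⟩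
    else 0 with hf
  have keypos : ∀ σ : Finset ℕ, ∀ v : ℕ,
      ∀ h : σ ⊆ S ∧ v ∉ σ ∧ insert v σ ∈ K.filter (fun σ => σ.card = 1 + 1),
      f (σ, v) = (-1 : F) ^ ((σ.filter (fun u => u < v)).card) * c ⟨insert v σ, h.2.2⟩ := by
    intro σ v h
    rw [hf]
    exact dif_pos h
  have keyneg : ∀ σ : Finset ℕ, ∀ v : ℕ,
      ¬(σ ⊆ S ∧ v ∉ σ ∧ insert v σ ∈ K.filter (fun σ => σ.card = 1 + 1)) →
      f (σ, v) = 0 := by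
    intro σ v h
    rw [hf]
    exact dif_neg h
  have step1 : phiS F K S (bdry F K 1 c) = ∑ p ∈ X ×ˢ verts K, f p := by
    rw [Finset.sum_product]
    show (∑ τ : {σ // σ ∈ X}, if (τ : Finset ℕ) ⊆ S then bdry F K 1 c τ else 0) = _
    rw [← Finset.sum_coe_sort X (fun σ => ∑ v ∈ verts K, f (σ, v))]
    refine Finset.sum_congr rfl fun τ _ => ?_
    by_cases hτS : (τ : Finset ℕ) ⊆ S
    · rw [if_pos hτS, bdry_apply]
      refine Finset.sum_congr rfl fun v _ => ?_
      by_cases h : v ∉ τ.1 ∧ insert v τ.1 ∈ K.filter (fun σ => σ.card = 1 + 1)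
      · rw [dif_pos h, keypos τ.1 v ⟨hτS, h⟩]
      · rw [dif_neg h, keyneg τ.1 v (by tauto)]
    · rw [if_neg hτS]
      exact (Finset.sum_eq_zero fun v _ => keyneg τ.1 v (by tauto)).symm
  rw [step1]
  set g0 : Finset ℕ × ℕ → Finset ℕ × ℕ := fun p =>
    if h : (p.1 ⊆ S ∧ p.2 ∉ p.1 ∧ insert p.2 p.1 ∈ K.filter (fun σ => σ.card = 1 + 1))
        ∧ 0 < p.1.card then
      ({p.2}, p.1.min' (Finset.card_pos.1 h.2))
    else p with hg0
  have g0pos : ∀ p : Finset ℕ × ℕ,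
      ∀ h : (p.1 ⊆ S ∧ p.2 ∉ p.1 ∧ insert p.2 p.1 ∈ K.filter (fun σ => σ.card = 1 + 1))
        ∧ 0 < p.1.card,
      g0 p = ({p.2}, p.1.min' (Finset.card_pos.1 h.2)) := by
    intro p h; rw [hg0]; exact dif_pos h
  have g0neg : ∀ p : Finset ℕ × ℕ,
      ¬((p.1 ⊆ S ∧ p.2 ∉ p.1 ∧ insert p.2 p.1 ∈ K.filter (fun σ => σ.card = 1 + 1))
        ∧ 0 < p.1.card) → g0 p = p := by
    intro p h; rw [hg0]; exact dif_neg h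
  have hcard : ∀ p : Finset ℕ × ℕ, p ∈ X ×ˢ verts K → p.1.card = 1 := fun p hp =>
    (Finset.mem_filter.1 (Finset.mem_product.1 hp).1).2
  -- main structural fact for points satisfying the condition
  have main : ∀ p : Finset ℕ × ℕ, p.1.card = 1 →
      ∀ h : p.1 ⊆ S ∧ p.2 ∉ p.1 ∧ insert p.2 p.1 ∈ K.filter (fun σ => σ.card = 1 + 1),
      ∃ u : ℕ, p.1 = {u} ∧ u ≠ p.2 ∧
        g0 p = ({p.2}, u) ∧
        (({p.2} : Finset ℕ) ⊆ S ∧ u ∉ ({p.2} : Finset ℕ) ∧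
          insert u ({p.2} : Finset ℕ) ∈ K.filter (fun σ => σ.card = 1 + 1)) := by
    intro p hc1 h
    have hpos : 0 < p.1.card := by omega
    set u := p.1.min' (Finset.card_pos.1 hpos) with hu
    have hup : u ∈ p.1 := Finset.min'_mem _ _
    have hp1 : p.1 = {u} := sing_of hc1 hup
    have hne : u ≠ p.2 := fun he => h.2.1 (he ▸ hup)
    have heq : insert u ({p.2} : Finset ℕ) = insert p.2 p.1 := by
      rw [hp1]; exact Finset.pair_comm u p.2
    have hmem2 : insert p.2 p.1 ∈ K := (Finset.mem_filter.1 h.2.2).1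
    have hcard2 : (insert p.2 p.1).card = 2 := by
      have := (Finset.mem_filter.1 h.2.2).2; omega
    refine ⟨u, hp1, hne, g0pos p ⟨h, hpos⟩, ?_, by simpa using hne, by rw [heq]; exact h.2.2⟩
    rw [Finset.singleton_subset_iff]
    exact hedge _ hmem2 hcard2 u (by rw [← heq]; exact Finset.mem_insert_self u _)
      p.2 (Finset.mem_insert_self _ _) (h.1 hup)
  refine Finset.sum_involution (fun p _ => g0 p) ?_ ?_ ?_ ?_
  · -- cancellation
    intro p hp
    show f p + f (g0 p) = 0
    by_cases h : p.1 ⊆ S ∧ p.2 ∉ p.1 ∧ insert p.2 p.1 ∈ K.filter (fun σ => σ.card = 1 + 1)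
    · obtain ⟨u, hp1, hne, hg, h'⟩ := main p (hcard p hp) h
      rw [hg]
      have hx : f p = f (p.1, p.2) := by rfl
      rw [hx, keypos p.1 p.2 h, keypos {p.2} u h']
      have hc : (⟨insert u ({p.2} : Finset ℕ), h'.2.2⟩ :
          {σ // σ ∈ K.filter (fun σ => σ.card = 1 + 1)}) = ⟨insert p.2 p.1, h.2.2⟩ :=
        Subtype.ext (by
          show insert u ({p.2} : Finset ℕ) = insert p.2 p.1
          rw [hp1]; exact Finset.pair_comm u p.2)
      rw [hc]
      have e1 : (p.1.filter (fun w => w < p.2)).card = (if u < p.2 then 1 else 0) := by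
        rw [hp1, Finset.filter_singleton]
        split <;> simp
      have e2 : ((({p.2} : Finset ℕ)).filter (fun w => w < u)).card
          = (if p.2 < u then 1 else 0) := by
        rw [Finset.filter_singleton]
        split <;> simp
      rw [e1, e2]
      rcases lt_or_gt_of_ne hne with hlt | hlt
      · rw [if_pos hlt, if_neg (by omega)]
        simp only [pow_one, pow_zero]
        ring
      · rw [if_neg (by omega), if_pos hlt]
        simp only [pow_one, pow_zero]
        ring
    · rw [g0neg p (by tauto)]
      have : f p = 0 := by
        have hx : f p = f (p.1, p.2) := by rfl
        rw [hx]; exact keyneg p.1 p.2 h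
      rw [this]; ring
  · -- g ≠ id on non-vanishing terms
    intro p hp hfp
    show g0 p ≠ p
    by_cases h : p.1 ⊆ S ∧ p.2 ∉ p.1 ∧ insert p.2 p.1 ∈ K.filter (fun σ => σ.card = 1 + 1)
    · obtain ⟨u, hp1, hne, hg, h'⟩ := main p (hcard p hp) h
      rw [hg]
      intro hcontra
      exact hne (congrArg Prod.snd hcontra)
    · refine absurd ?_ hfp
      have hx : f p = f (p.1, p.2) := by rfl
      rw [hx]; exact keyneg p.1 p.2 h
  · -- g maps into the index set
    intro p hp
    show g0 p ∈ X ×ˢ verts K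
    by_cases h : p.1 ⊆ S ∧ p.2 ∉ p.1 ∧ insert p.2 p.1 ∈ K.filter (fun σ => σ.card = 1 + 1)
    · obtain ⟨u, hp1, hne, hg, h'⟩ := main p (hcard p hp) h
      rw [hg, Finset.mem_product]
      constructor
      · rw [hX, Finset.mem_filter]
        exact ⟨hK _ (Finset.mem_filter.1 h.2.2).1 _
          (Finset.singleton_subset_iff.2 (Finset.mem_insert_self _ _)),
          Finset.card_singleton _⟩
      · refine mem_verts.2 ⟨p.1, (Finset.mem_filter.1 (Finset.mem_product.1 hp).1).1, ?_⟩
        rw [hp1]; exact Finset.mem_singleton_self u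
    · rw [g0neg p (by tauto)]; exact hp
  · -- involutive
    intro p hp
    show g0 (g0 p) = p
    by_cases h : p.1 ⊆ S ∧ p.2 ∉ p.1 ∧ insert p.2 p.1 ∈ K.filter (fun σ => σ.card = 1 + 1)
    · obtain ⟨u, hp1, hne, hg, h'⟩ := main p (hcard p hp) h
      rw [hg]
      have h2 : (({p.2}, u) : Finset ℕ × ℕ).1.card = 1 := Finset.card_singleton _
      obtain ⟨w, hw1, hwne, hwg, hw'⟩ := main ({p.2}, u) h2 h'
      rw [hwg]
      have hw1' : ({p.2} : Finset ℕ) = {w} := hw1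
      have hw : w = p.2 := Finset.singleton_injective hw1'.symm
      show (({u} : Finset ℕ), w) = p
      rw [hw, ← hp1]
    · rw [g0neg p (by tauto), g0neg p (by tauto)]

lemma phiS_indicator (F : Type*) [Field F] (K : Finset (Finset ℕ)) (S : Finset ℕ)
    (σ0 : {σ // σ ∈ K.filter (fun σ => σ.card = 1)}) :
    phiS F K S (fun τ => if τ = σ0 then 1 else 0) =
      if (σ0 : Finset ℕ) ⊆ S then 1 else 0 := by
  show (∑ τ : {σ // σ ∈ K.filter (fun σ => σ.card = 1)},
      if (τ : Finset ℕ) ⊆ S then (if τ = σ0 then (1 : F) else 0) else 0) = _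
  rw [Finset.sum_eq_single σ0]
  · simp
  · intro τ _ hτ
    by_cases hS : (τ : Finset ℕ) ⊆ S <;> simp [hS, hτ]
  · intro h
    exact absurd (Finset.mem_univ σ0) h

lemma hbetti1_ge_one (F : Type*) [Field F] (K' : Finset (Finset ℕ)) (hK' : IsComplex K')
    (A B : Finset ℕ) (hdisj : Disjoint A B) (hsub : ∀ σ ∈ K', σ ⊆ A ∨ σ ⊆ B)
    (x y : ℕ) (hxA : x ∈ A) (hyB : y ∈ B) (hx : {x} ∈ K') (hy : {y} ∈ K') :
    1 ≤ hBetti F K' 1 := by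
  classical
  have hxy : x ≠ y := fun he => Finset.disjoint_left.1 hdisj hxA (he ▸ hyB)
  have hxm : {x} ∈ K'.filter (fun σ => σ.card = 1) :=
    Finset.mem_filter.2 ⟨hx, Finset.card_singleton _⟩
  have hym : {y} ∈ K'.filter (fun σ => σ.card = 1) :=
    Finset.mem_filter.2 ⟨hy, Finset.card_singleton _⟩
  have hn2 : 2 ≤ (K'.filter (fun σ => σ.card = 1)).card := by
    rw [show (2 : ℕ) = 1 + 1 from rfl]
    apply Finset.one_lt_card.2
    exact ⟨{x}, hxm, {y}, hym, by simp [hxy]⟩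
  -- the two linear functionals
  set Φ := (phiS F K' A).prod (phiS F K' B) with hΦ
  have hedgeA : ∀ σ ∈ K', σ.card = 2 → ∀ u ∈ σ, ∀ v ∈ σ, u ∈ A → v ∈ A := by
    intro σ hσ _ u hu v hv huA
    rcases hsub σ hσ with h | h
    · exact h hv
    · exact absurd (h hu) (Finset.disjoint_left.1 hdisj huA)
  have hedgeB : ∀ σ ∈ K', σ.card = 2 → ∀ u ∈ σ, ∀ v ∈ σ, u ∈ B → v ∈ B := by
    intro σ hσ _ u hu v hv huB
    rcases hsub σ hσ with h | h
    · exact absurd huB (Finset.disjoint_left.1 hdisj (h hu))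
    · exact h hv
  have hrange : LinearMap.range (bdry F K' 1) ≤ LinearMap.ker Φ := by
    rintro _ ⟨c, rfl⟩
    rw [LinearMap.mem_ker, hΦ, LinearMap.prod_apply]
    have h1 := phiS_bdry F K' hK' A hedgeA c
    have h2 := phiS_bdry F K' hK' B hedgeB c
    exact Prod.ext (by simpa using h1) (by simpa using h2)
  have hsurj : Function.Surjective Φ := by
    intro z
    set ex : Chain F K' 1 := fun τ => if τ = ⟨{x}, hxm⟩ then 1 else 0 with hex
    set ey : Chain F K' 1 := fun τ => if τ = ⟨{y}, hym⟩ then 1 else 0 with hey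
    have hAx : phiS F K' A ex = 1 := by
      rw [hex, phiS_indicator, if_pos (by simpa using hxA)]
    have hBx : phiS F K' B ex = 0 := by
      rw [hex, phiS_indicator,
        if_neg (by simpa using Finset.disjoint_left.1 hdisj hxA)]
    have hAy : phiS F K' A ey = 0 := by
      rw [hey, phiS_indicator,
        if_neg (by simpa using Finset.disjoint_right.1 hdisj hyB)]
    have hBy : phiS F K' B ey = 1 := by
      rw [hey, phiS_indicator, if_pos (by simpa using hyB)]
    refine ⟨z.1 • ex + z.2 • ey, ?_⟩
    rw [hΦ]
    have : ∀ c, ((phiS F K' A).prod (phiS F K' B)) c = (phiS F K' A c, phiS F K' B c) :=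
      fun c => rfl
    rw [this, map_add, map_add, map_smul, map_smul, map_smul, map_smul,
      hAx, hBx, hAy, hBy]
    simp
  have hrankΦ : Module.finrank F (LinearMap.range Φ) = 2 := by
    rw [LinearMap.range_eq_top.2 hsurj, finrank_top]
    rw [Module.finrank_prod, Module.finrank_self]
  have hrn := LinearMap.finrank_range_add_finrank_ker Φ
  rw [chain_rank, hrankΦ] at hrn
  have hr : Module.finrank F (LinearMap.range (bdry F K' 1)) ≤
      Module.finrank F (LinearMap.ker Φ) := Submodule.finrank_mono hrange
  have hk := ker_bdry0_ge F K'
  show 1 ≤ Module.finrank F (LinearMap.ker (bdry F K' 0)) -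
    Module.finrank F (LinearMap.range (bdry F K' 1))
  omega

lemma hbetti1_ge_noedge (F : Type*) [Field F] (K' : Finset (Finset ℕ))
    (hne : K'.filter (fun σ => σ.card = 1 + 1) = ∅) :
    (K'.filter (fun σ => σ.card = 1)).card - 1 ≤ hBetti F K' 1 := by
  have hr : Module.finrank F (LinearMap.range (bdry F K' 1)) = 0 := by
    have h1 := range_rank_le F K' 1
    have h0 : (K'.filter (fun σ => σ.card = 1 + 1)).card = 0 := by rw [hne]; rfl
    omega
  have hk := ker_bdry0_ge F K'
  show _ ≤ Module.finrank F (LinearMap.ker (bdry F K' 0)) -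
    Module.finrank F (LinearMap.range (bdry F K' 1))
  omega

lemma rtb_ge_hbetti1 (F : Type*) [Field F] (K' : Finset (Finset ℕ)) (hne : K' ≠ ∅)
    (hv : 1 ≤ (verts K').card) : hBetti F K' 1 ≤ rtb F K' := by
  rw [rtb, if_neg hne]
  exact Finset.single_le_sum (f := fun j => hBetti F K' j)
    (fun i _ => Nat.zero_le _) (Finset.mem_range.2 (by omega))

lemma empty_mem {K : Finset (Finset ℕ)} (hK : IsComplex K) (hne : K.Nonempty) : ∅ ∈ K := by
  obtain ⟨σ, hσ⟩ := hne
  exact hK σ hσ ∅ (Finset.empty_subset _)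

lemma restr_empty {K : Finset (Finset ℕ)} (h : ∅ ∈ K) : restr K ∅ = {∅} := by
  ext σ
  simp only [restr, Finset.mem_filter, Finset.mem_singleton, Finset.subset_empty]
  constructor
  · rintro ⟨_, rfl⟩; rfl
  · rintro rfl; exact ⟨h, rfl⟩

lemma rtb_singleton_empty (F : Type*) [Field F] : rtb F ({∅} : Finset (Finset ℕ)) = 1 := by
  have hv : verts ({∅} : Finset (Finset ℕ)) = ∅ := by
    simp [verts]
  rw [rtb, if_neg (Finset.singleton_ne_empty ∅), hv]
  simp only [Finset.card_empty, zero_add, Finset.sum_range_one]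
  have h0 : (({∅} : Finset (Finset ℕ)).filter (fun σ => σ.card = 0)).card = 1 := by
    rw [Finset.filter_true_of_mem (by simp +contextual)]
    simp
  have h1 : Module.finrank F (LinearMap.range (bdry F ({∅} : Finset (Finset ℕ)) 0)) = 0 := by
    have hle := range_rank_le F ({∅} : Finset (Finset ℕ)) 0
    have he : ((({∅} : Finset (Finset ℕ)).filter (fun σ => σ.card = 0 + 1))).card = 0 := by
      rw [Finset.filter_singleton]
      norm_num
    omega
  show Module.finrank F (Chain F ({∅} : Finset (Finset ℕ)) 0) -
      Module.finrank F (LinearMap.range (bdry F ({∅} : Finset (Finset ℕ)) 0)) = 1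
  rw [chain_rank, h0, h1]

lemma sum_powerset_card (V : Finset ℕ) :
    2 * ∑ J ∈ V.powerset, J.card = V.card * 2 ^ V.card := by
  classical
  induction V using Finset.induction_on with
  | empty => simp
  | insert a s ha ih =>
    rw [Finset.powerset_insert, Finset.sum_union, Finset.sum_image]
    · have h1 : ∑ J ∈ s.powerset, (insert a J).card = ∑ J ∈ s.powerset, (J.card + 1) := by
        refine Finset.sum_congr rfl fun J hJ => ?_
        rw [Finset.card_insert_of_notMem fun hc => ha ((Finset.mem_powerset.1 hJ) hc)]
      rw [h1, Finset.sum_add_distrib, Finset.sum_const, smul_eq_mul, mul_one,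
        Finset.card_powerset, Finset.card_insert_of_notMem ha, pow_succ]
      nlinarith [ih]
    · intro J hJ J' hJ' he
      have : ∀ T ∈ s.powerset, (insert a T).erase a = T := fun T hT =>
        Finset.erase_insert fun hc => ha ((Finset.mem_powerset.1 hT) hc)
      rw [← this J hJ, ← this J' hJ', he]
    · rw [Finset.disjoint_left]
      intro J hJ hJ2
      obtain ⟨T, _, rfl⟩ := Finset.mem_image.1 hJ2
      exact ha ((Finset.mem_powerset.1 hJ) (Finset.mem_insert_self a T))

lemma mixed_count (V A B : Finset ℕ) (hdisj : Disjoint A B) (hunion : A ∪ B = V) :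
    (V.powerset.filter (fun J => ¬(J ⊆ A ∨ J ⊆ B))).card + (2 ^ A.card + 2 ^ B.card) =
      2 ^ V.card + 1 := by
  classical
  have hAV : A ⊆ V := hunion ▸ Finset.subset_union_left
  have hBV : B ⊆ V := hunion ▸ Finset.subset_union_right
  have hpos : V.powerset.filter (fun J => (J ⊆ A ∨ J ⊆ B)) = A.powerset ∪ B.powerset := by
    ext J
    simp only [Finset.mem_filter, Finset.mem_powerset, Finset.mem_union]
    constructor
    · rintro ⟨_, h⟩; exact h
    · rintro (h | h)
      · exact ⟨h.trans hAV, Or.inl h⟩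
      · exact ⟨h.trans hBV, Or.inr h⟩
  have hcount := Finset.card_filter_add_card_filter_not
    (s := V.powerset) (p := fun J => (J ⊆ A ∨ J ⊆ B))
  have hinter : A.powerset ∩ B.powerset = {∅} := by
    ext J
    simp only [Finset.mem_inter, Finset.mem_powerset, Finset.mem_singleton]
    constructor
    · rintro ⟨h1, h2⟩
      have : J ⊆ A ∩ B := Finset.subset_inter h1 h2
      rw [Finset.disjoint_iff_inter_eq_empty.1 hdisj] at this
      exact Finset.subset_empty.1 this
    · rintro rfl
      exact ⟨Finset.empty_subset _, Finset.empty_subset _⟩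
  have hcu := Finset.card_union_add_card_inter A.powerset B.powerset
  rw [hinter, Finset.card_singleton, Finset.card_powerset, Finset.card_powerset] at hcu
  rw [hpos, Finset.card_powerset] at hcount
  omega


/-- A tight complex whose realization is disconnected must be
`S⁰ = ∂Δ^[2]`, i.e. two disjoint vertices. -/
theorem stmt15 (F : Type*) [Field F] (K : Finset (Finset ℕ))
    (hK : IsComplex K) (ht : IsTight F K) (hd : IsDisconn K) :
    ∃ a b : ℕ, a ≠ b ∧ K = {∅, {a}, {b}} := by
  classical
  obtain ⟨A, B, hA, hB, hdisj, hunion, hsplit⟩ := hd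
  have hAV : A ⊆ verts K := hunion ▸ Finset.subset_union_left
  have hBV : B ⊆ verts K := hunion ▸ Finset.subset_union_right
  obtain ⟨x0, hx0A⟩ := hA
  obtain ⟨y0, hy0B⟩ := hB
  have hKne : K.Nonempty := by
    obtain ⟨σ, hσ, _⟩ := mem_verts.1 (hAV hx0A)
    exact ⟨σ, hσ⟩
  have hempty : ∅ ∈ K := empty_mem hK hKne
  have hsing : ∀ v ∈ verts K, {v} ∈ K := fun v hv => singleton_mem hK hv
  have hcardV : A.card + B.card = (verts K).card := by
    rw [← hunion, Finset.card_union_of_disjoint hdisj]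
  have ha1 : 1 ≤ A.card := Finset.card_pos.2 ⟨x0, hx0A⟩
  have hb1 : 1 ≤ B.card := Finset.card_pos.2 ⟨y0, hy0B⟩
  have hsup1 : 1 ≤ K.sup Finset.card := by
    have := Finset.le_sup (f := Finset.card) (hsing x0 (hAV hx0A))
    simpa using this
  have hrtb0 : rtb F (restr K ∅) = 1 := by
    rw [restr_empty hempty]; exact rtb_singleton_empty F
  have htE : Dtilde F (verts K) K = 2 ^ ((verts K).card - K.sup Finset.card) := ht
  have hDt : Dtilde F (verts K) K = ∑ J ∈ (verts K).powerset, rtb F (restr K J) := rfl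
  by_cases hs2 : 2 ≤ K.sup Finset.card
  · exfalso
    set mixed := (verts K).powerset.filter (fun J => ¬(J ⊆ A ∨ J ⊆ B)) with hmixed
    have hmix1 : ∀ J ∈ mixed, 1 ≤ rtb F (restr K J) := by
      intro J hJ
      rw [hmixed, Finset.mem_filter] at hJ
      obtain ⟨hJV, hJm⟩ := hJ
      push_neg at hJm
      obtain ⟨hJA, hJB⟩ := hJm
      obtain ⟨y, hyJ, hyA⟩ := Finset.not_subset.1 hJA
      obtain ⟨x, hxJ, hxB⟩ := Finset.not_subset.1 hJB
      rw [Finset.mem_powerset] at hJV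
      have hyB' : y ∈ B := by
        have := hJV hyJ
        rw [← hunion, Finset.mem_union] at this
        tauto
      have hxA' : x ∈ A := by
        have := hJV hxJ
        rw [← hunion, Finset.mem_union] at this
        tauto
      have hxK : {x} ∈ restr K J :=
        mem_restr.2 ⟨hsing x (hJV hxJ), Finset.singleton_subset_iff.2 hxJ⟩
      have hyK : {y} ∈ restr K J :=
        mem_restr.2 ⟨hsing y (hJV hyJ), Finset.singleton_subset_iff.2 hyJ⟩
      have hb := hbetti1_ge_one F (restr K J) (restr_isComplex hK J) A B hdisj
        (fun σ hσ => hsplit σ (mem_restr.1 hσ).1) x y hxA' hyB' hxK hyK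
      refine hb.trans (rtb_ge_hbetti1 F (restr K J) ?_ ?_)
      · intro hc
        rw [hc] at hxK; exact absurd hxK (Finset.notMem_empty _)
      · rw [verts_restr hK hJV]
        exact Finset.card_pos.2 ⟨x, hxJ⟩
    have hsub0 : insert ∅ mixed ⊆ (verts K).powerset := by
      intro J hJ
      rcases Finset.mem_insert.1 hJ with rfl | hJ
      · exact Finset.empty_mem_powerset _
      · exact Finset.mem_of_mem_filter J hJ
    have hnm : (∅ : Finset ℕ) ∉ mixed := fun h =>
      (Finset.mem_filter.1 h).2 (Or.inl (Finset.empty_subset A))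
    have hlow : mixed.card + 1 ≤ Dtilde F (verts K) K := by
      have h1 : ∀ J ∈ insert ∅ mixed, 1 ≤ rtb F (restr K J) := by
        intro J hJ
        rcases Finset.mem_insert.1 hJ with rfl | hJ
        · rw [hrtb0]
        · exact hmix1 J hJ
      calc mixed.card + 1 = (insert ∅ mixed).card := by
            rw [Finset.card_insert_of_notMem hnm]
        _ = (insert ∅ mixed).card • 1 := by rw [smul_eq_mul, mul_one]
        _ ≤ ∑ J ∈ insert ∅ mixed, rtb F (restr K J) :=
            Finset.card_nsmul_le_sum _ _ _ h1
        _ ≤ ∑ J ∈ (verts K).powerset, rtb F (restr K J) :=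
            Finset.sum_le_sum_of_subset hsub0
        _ = Dtilde F (verts K) K := rfl
    have hcount : mixed.card + (2 ^ A.card + 2 ^ B.card) = 2 ^ (verts K).card + 1 :=
      mixed_count (verts K) A B hdisj hunion
    have hup : Dtilde F (verts K) K ≤ 2 ^ ((verts K).card - 2) := by
      rw [htE]
      exact Nat.pow_le_pow_right (by norm_num) (Nat.sub_le_sub_left hs2 (verts K).card)
    have key : ∀ p q : ℕ, 1 ≤ p → 1 ≤ q → p + q ≤ p * q + 1 := by
      intro p q hp hq; nlinarith
    have e1 : 2 ^ (A.card - 1) * 2 ^ (B.card - 1) = 2 ^ ((verts K).card - 2) := by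
      rw [← pow_add]; congr 1; omega
    have e2 : 2 ^ A.card = 2 ^ (A.card - 1) * 2 := by
      rw [← pow_succ]; congr 1; omega
    have e3 : 2 ^ B.card = 2 ^ (B.card - 1) * 2 := by
      rw [← pow_succ]; congr 1; omega
    have e4 : 2 ^ ((verts K).card - 1) = 2 ^ ((verts K).card - 2) * 2 := by
      rw [← pow_succ]; congr 1; omega
    have e5 : 2 ^ (verts K).card = 2 ^ ((verts K).card - 1) * 2 := by
      rw [← pow_succ]; congr 1; omega
    have hkey := key _ _ (Nat.one_le_two_pow (n := A.card - 1))
      (Nat.one_le_two_pow (n := B.card - 1))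
    rw [e1] at hkey
    have h1 : 1 ≤ 2 ^ ((verts K).card - 2) := Nat.one_le_two_pow
    omega
  · -- max simplex dimension 0
    have hsup : K.sup Finset.card = 1 := by omega
    have hcard1 : ∀ σ ∈ K, σ.card ≤ 1 := by
      intro σ hσ
      have := Finset.le_sup (f := Finset.card) hσ
      omega
    have hrtbJ : ∀ J ∈ (verts K).powerset, J.Nonempty → J.card ≤ rtb F (restr K J) + 1 := by
      intro J hJ hJne
      rw [Finset.mem_powerset] at hJ
      have hnoedge : (restr K J).filter (fun σ => σ.card = 1 + 1) = ∅ := by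
        rw [Finset.filter_eq_empty_iff]
        intro σ hσ
        have := hcard1 σ (mem_restr.1 hσ).1
        omega
      have hfilter : (restr K J).filter (fun σ => σ.card = 1) = J.image (fun v => {v}) := by
        ext σ
        simp only [Finset.mem_filter, Finset.mem_image]
        constructor
        · rintro ⟨hσ, hc⟩
          obtain ⟨v, rfl⟩ := Finset.card_eq_one.1 hc
          exact ⟨v, (mem_restr.1 hσ).2 (Finset.mem_singleton_self v), rfl⟩
        · rintro ⟨v, hv, rfl⟩
          exact ⟨mem_restr.2 ⟨hsing v (hJ hv), Finset.singleton_subset_iff.2 hv⟩,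
            Finset.card_singleton v⟩
      have hcardfil : ((restr K J).filter (fun σ => σ.card = 1)).card = J.card := by
        rw [hfilter,
          Finset.card_image_of_injective _ (fun u v h => Finset.singleton_injective h)]
      have hb := hbetti1_ge_noedge F (restr K J) hnoedge
      rw [hcardfil] at hb
      have hne' : restr K J ≠ ∅ := by
        intro hc
        have hns : ∅ ∈ restr K J := mem_restr.2 ⟨hempty, Finset.empty_subset _⟩
        rw [hc] at hns; exact absurd hns (Finset.notMem_empty _)
      have hv' : 1 ≤ (verts (restr K J)).card := by
        rw [verts_restr hK hJ]
        exact Finset.card_pos.2 hJne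
      have hrtb := rtb_ge_hbetti1 F (restr K J) hne' hv'
      have hJ1 : 1 ≤ J.card := Finset.card_pos.2 hJne
      omega
    -- summation
    have hDsplit : Dtilde F (verts K) K
        = 1 + ∑ J ∈ (verts K).powerset.erase ∅, rtb F (restr K J) := by
      rw [hDt, ← Finset.add_sum_erase _ _ (Finset.empty_mem_powerset (verts K)), hrtb0]
    set S := ∑ J ∈ (verts K).powerset.erase ∅, rtb F (restr K J) with hS
    have hTle : ∑ J ∈ (verts K).powerset.erase ∅, J.card
        ≤ S + ((verts K).powerset.erase ∅).card := by
      have h1 : ∑ J ∈ (verts K).powerset.erase ∅, J.card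
          ≤ ∑ J ∈ (verts K).powerset.erase ∅, (rtb F (restr K J) + 1) := by
        refine Finset.sum_le_sum fun J hJ => ?_
        have hJm := Finset.mem_of_mem_erase hJ
        have hJne : J.Nonempty :=
          Finset.nonempty_of_ne_empty (Finset.ne_of_mem_erase hJ)
        exact hrtbJ J hJm hJne
      rw [Finset.sum_add_distrib, Finset.sum_const, smul_eq_mul, mul_one] at h1
      exact h1
    have hTfull : ∑ J ∈ (verts K).powerset, J.card
        = ∑ J ∈ (verts K).powerset.erase ∅, J.card := by
      rw [← Finset.add_sum_erase _ Finset.card (Finset.empty_mem_powerset (verts K)),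
        Finset.card_empty, zero_add]
    have hsum := sum_powerset_card (verts K)
    rw [hTfull] at hsum
    have hcE : ((verts K).powerset.erase ∅).card + 1 = 2 ^ (verts K).card := by
      rw [Finset.card_erase_of_mem (Finset.empty_mem_powerset _), Finset.card_powerset]
      have : 1 ≤ 2 ^ (verts K).card := Nat.one_le_two_pow
      omega
    have hD1 : Dtilde F (verts K) K = 2 ^ ((verts K).card - 1) := by rw [htE, hsup]
    have e5 : 2 ^ (verts K).card = 2 ^ ((verts K).card - 1) * 2 := by
      rw [← pow_succ]; congr 1; omega
    have hm2 : (verts K).card = 2 := by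
      by_contra hmne
      have h3 : 3 ≤ (verts K).card := by omega
      have h3m : 3 * 2 ^ (verts K).card ≤ (verts K).card * 2 ^ (verts K).card := Nat.mul_le_mul_right _ h3
      rw [← hsum] at h3m
      have h1 : 1 ≤ 2 ^ ((verts K).card - 1) := Nat.one_le_two_pow
      omega
    obtain ⟨x, y, hxy, hVxy⟩ := Finset.card_eq_two.1 hm2
    refine ⟨x, y, hxy, ?_⟩
    ext σ
    simp only [Finset.mem_insert, Finset.mem_singleton]
    constructor
    · intro hσ
      have hc := hcard1 σ hσ
      rcases Nat.le_one_iff_eq_zero_or_eq_one.1 hc with h0 | h1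
      · left; exact Finset.card_eq_zero.1 h0
      · obtain ⟨v, rfl⟩ := Finset.card_eq_one.1 h1
        have hv : v ∈ verts K := mem_verts.2 ⟨{v}, hσ, Finset.mem_singleton_self v⟩
        rw [hVxy] at hv
        rcases Finset.mem_insert.1 hv with rfl | hv
        · right; left; rfl
        · right; right; rw [Finset.mem_singleton.1 hv]
    · rintro (rfl | rfl | rfl)
      · exact hempty
      · exact hsing x (by rw [hVxy]; exact Finset.mem_insert_self _ _)
      · exact hsing y (by rw [hVxy]; exact Finset.mem_insert_of_mem (Finset.mem_singleton_self y))
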